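/- Fix a fuzzifier α > 1, an integer k ≥ 1, points x_1,…,x_n ∈ ℝ^d and centers μ_1,…,μ_k ∈ ℝ^d such that every distance d_{iℓ} := ‖x_i − μ_ℓ‖₂ is strictly positive. Define U*_{ij} = ( Σ_{ℓ=1}^k (d_{ij}/d_{iℓ})^{2/(α−1)} )^{−1} for i ∈ [n], j ∈ [k]. Then U* is a feasible membership matrix (every entry lies in [0,1] and every row sums to 1), and for every feasible membership matrix V one has J_fm(x, μ, U*) ≤ J_fm(x, μ, V). -/

import Mathlib

open scoped BigOperators
open Finset

private lemma fuzzy_row_lb {k : ℕ} {α : ℝ} (hα : 1 < α) (c : Fin k → ℝ) (hc : ∀ j, 0 < c j)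
    (v : Fin k → ℝ) (hv : ∀ j, 0 ≤ v j) (hv1 : ∑ j, v j = 1) :
    (∑ j, c j ^ (1/(1-α))) ^ (1-α) ≤ ∑ j, v j ^ α * c j := by
  rcases Nat.eq_zero_or_pos k with hk0 | hk0
  · subst hk0; simp at hv1
  have hne : Nonempty (Fin k) := ⟨⟨0, hk0⟩⟩
  set q : ℝ := α / (α - 1) with hq
  have hα1 : (α:ℝ) - 1 ≠ 0 := ne_of_gt (by linarith)
  have h1α : (1:ℝ) - α ≠ 0 := by intro h; apply hα1; linarith
  have hpq : Real.HolderConjugate α q := (Real.holderConjugate_iff_eq_conjExponent hα).2 hq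
  set S : ℝ := ∑ j, c j ^ (1/(1-α)) with hSdef
  have hS : 0 < S := Finset.sum_pos (fun j _ => Real.rpow_pos_of_pos (hc j) _) univ_nonempty
  set A : ℝ := ∑ j, v j ^ α * c j with hAdef
  have hA : 0 ≤ A := Finset.sum_nonneg fun j _ =>
    mul_nonneg (Real.rpow_nonneg (hv j) _) (hc j).le
  -- Hölder
  have holder := Real.inner_le_Lp_mul_Lq_of_nonneg (univ : Finset (Fin k))
    (f := fun j => v j * c j ^ (α⁻¹)) (g := fun j => c j ^ (-α⁻¹)) hpq
    (fun j _ => mul_nonneg (hv j) (Real.rpow_pos_of_pos (hc j) _).le) (fun j _ => (Real.rpow_pos_of_pos (hc j) _).le)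
  have hfg : ∀ j : Fin k, v j * c j ^ (α⁻¹) * c j ^ (-α⁻¹) = v j := by
    intro j
    rw [mul_assoc, ← Real.rpow_add (hc j)]
    simp
  have hfp : ∀ j : Fin k, (v j * c j ^ (α⁻¹)) ^ α = v j ^ α * c j := by
    intro j
    rw [Real.mul_rpow (hv j) (Real.rpow_pos_of_pos (hc j) _).le,
      ← Real.rpow_mul (hc j).le, inv_mul_cancel₀ (by positivity : (α:ℝ) ≠ 0), Real.rpow_one]
  have hgq : ∀ j : Fin k, (c j ^ (-α⁻¹)) ^ q = c j ^ (1/(1-α)) := by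
    intro j
    rw [← Real.rpow_mul (hc j).le]
    congr 1
    rw [hq]
    field_simp [h1α]
    ring
  rw [show ∑ j, v j * c j ^ (α⁻¹) * c j ^ (-α⁻¹) = (1:ℝ) by
      rw [← hv1]; exact Finset.sum_congr rfl fun j _ => hfg j] at holder
  simp only [hfp, hgq] at holder
  rw [← hAdef, ← hSdef] at holder
  -- From 1 ≤ A^(1/α) * S^(1/q) deduce S^(1-α) ≤ A
  have hSq : 0 < S ^ (1/q) := Real.rpow_pos_of_pos hS _
  have h1 : S ^ (-(1/q)) ≤ A ^ (1/α) := by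
    rw [Real.rpow_neg hS.le, inv_le_iff_one_le_mul₀' hSq]
    linarith [holder]
  have h2 : (S ^ (-(1/q))) ^ α ≤ (A ^ (1/α)) ^ α :=
    Real.rpow_le_rpow (Real.rpow_pos_of_pos hS _).le h1 (by positivity)
  rw [← Real.rpow_mul hS.le, ← Real.rpow_mul hA] at h2
  rw [show (1/α) * α = 1 by field_simp, Real.rpow_one] at h2
  calc S ^ (1-α) = S ^ (-(1/q) * α) := by
        congr 1
        rw [hq, one_div, inv_div]
        field_simp
        ring
    _ ≤ A := h2

private lemma fuzzy_row_eq {k : ℕ} (hk : 1 ≤ k) {α : ℝ} (hα : 1 < α) (c : Fin k → ℝ)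
    (hc : ∀ j, 0 < c j) :
    ∑ j, (c j ^ (1/(1-α)) / ∑ ℓ, c ℓ ^ (1/(1-α))) ^ α * c j
      = (∑ j, c j ^ (1/(1-α))) ^ (1-α) := by
  have hne : Nonempty (Fin k) := ⟨⟨0, hk⟩⟩
  set S : ℝ := ∑ j, c j ^ (1/(1-α)) with hSdef
  have hS : 0 < S := Finset.sum_pos (fun j _ => Real.rpow_pos_of_pos (hc j) _) univ_nonempty
  have hterm : ∀ j : Fin k, (c j ^ (1/(1-α)) / S) ^ α * c j = c j ^ (1/(1-α)) / S ^ α := by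
    intro j
    rw [Real.div_rpow (Real.rpow_pos_of_pos (hc j) _).le hS.le,
      ← Real.rpow_mul (hc j).le, div_mul_eq_mul_div, ← Real.rpow_add_one (hc j).ne']
    congr 2
    have h1 : (1:ℝ) - α ≠ 0 := by
      have : (0:ℝ) < α - 1 := by linarith
      intro h; apply this.ne'; linarith
    field_simp
    ring
  rw [Finset.sum_congr rfl fun j _ => hterm j, ← Finset.sum_div, ← hSdef,
    Real.rpow_sub hS, Real.rpow_one]

private lemma Ustar_row {d k : ℕ} {α : ℝ} (hα : 1 < α)
    (y : EuclideanSpace ℝ (Fin d)) (μ : Fin k → EuclideanSpace ℝ (Fin d))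
    (hpos : ∀ ℓ : Fin k, 0 < ‖y - μ ℓ‖) (j : Fin k) :
    (∑ ℓ : Fin k, (‖y - μ j‖ / ‖y - μ ℓ‖) ^ (2 / (α - 1)))⁻¹
      = ((‖y - μ j‖^2 : ℝ) ^ (1/(1-α))) / ∑ ℓ, ((‖y - μ ℓ‖^2 : ℝ) ^ (1/(1-α))) := by
  have hneg : (2:ℝ)/(1-α) = -(2/(α-1)) := by
    rw [show (1:ℝ)-α = -(α-1) by ring, div_neg]
  have key : ∀ a : ℝ, 0 < a → (a^2 : ℝ) ^ (1/(1-α)) = a ^ ((2:ℝ)/(1-α)) := by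
    intro a ha
    rw [← Real.rpow_natCast a 2, ← Real.rpow_mul ha.le]
    congr 1
    push_cast
    ring
  have hterm : ∀ ℓ : Fin k, (‖y - μ j‖ / ‖y - μ ℓ‖) ^ (2/(α-1))
      = ‖y - μ j‖ ^ ((2:ℝ)/(α-1)) * ‖y - μ ℓ‖ ^ ((2:ℝ)/(1-α)) := by
    intro ℓ
    rw [Real.div_rpow (hpos j).le (hpos ℓ).le, div_eq_mul_inv, ← Real.rpow_neg (hpos ℓ).le,
      ← hneg]
  have hsum : (∑ ℓ, ((‖y - μ ℓ‖^2 : ℝ) ^ (1/(1-α)))) = ∑ ℓ, ‖y - μ ℓ‖ ^ ((2:ℝ)/(1-α)) :=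
    Finset.sum_congr rfl fun ℓ _ => key _ (hpos ℓ)
  rw [Finset.sum_congr rfl fun ℓ _ => hterm ℓ, ← Finset.mul_sum, mul_inv,
    ← Real.rpow_neg (hpos j).le, ← hneg, key _ (hpos j), hsum]
  exact (div_eq_mul_inv _ _).symm

/-- Optimality of the closed-form membership weights for fixed centers
(fuzzy k-means, Eq. (3) in the paper). -/
theorem fuzzy_membership_optimal {d n k : ℕ} (hk : 1 ≤ k) {α : ℝ} (hα : 1 < α)
    (x : Fin n → EuclideanSpace ℝ (Fin d)) (μ : Fin k → EuclideanSpace ℝ (Fin d))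
    (hpos : ∀ (i : Fin n) (ℓ : Fin k), 0 < ‖x i - μ ℓ‖)
    (Ustar : Fin n → Fin k → ℝ)
    (hUstar : ∀ i j, Ustar i j =
      (∑ ℓ : Fin k, (‖x i - μ j‖ / ‖x i - μ ℓ‖) ^ (2 / (α - 1)))⁻¹) :
    (∀ i j, Ustar i j ∈ Set.Icc (0 : ℝ) 1) ∧
    (∀ i, ∑ j, Ustar i j = 1) ∧
    ∀ V : Fin n → Fin k → ℝ,
      (∀ i j, V i j ∈ Set.Icc (0 : ℝ) 1) → (∀ i, ∑ j, V i j = 1) →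
      (∑ i, ∑ j, Ustar i j ^ α * ‖x i - μ j‖ ^ 2) ≤
        ∑ i, ∑ j, V i j ^ α * ‖x i - μ j‖ ^ 2 := by
  have hne : Nonempty (Fin k) := ⟨⟨0, hk⟩⟩
  set c : Fin n → Fin k → ℝ := fun i j => ‖x i - μ j‖ ^ 2 with hc
  have hcpos : ∀ i j, 0 < c i j := fun i j => pow_pos (hpos i j) 2
  have hU' : ∀ i j, Ustar i j = c i j ^ (1/(1-α)) / ∑ ℓ, c i ℓ ^ (1/(1-α)) := by
    intro i j
    rw [hUstar i j, Ustar_row hα (x i) μ (hpos i) j]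
  have hSpos : ∀ i, 0 < ∑ ℓ, c i ℓ ^ (1/(1-α)) := fun i =>
    Finset.sum_pos (fun ℓ _ => Real.rpow_pos_of_pos (hcpos i ℓ) _) Finset.univ_nonempty
  have hrowsum : ∀ i, ∑ j, Ustar i j = 1 := by
    intro i
    rw [Finset.sum_congr rfl fun j _ => hU' i j, ← Finset.sum_div, div_self (hSpos i).ne']
  refine ⟨?_, hrowsum, ?_⟩
  · intro i j
    constructor
    · rw [hU' i j]
      exact div_nonneg (Real.rpow_nonneg (hcpos i j).le _) (hSpos i).le
    · rw [hU' i j, div_le_one (hSpos i)]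
      exact Finset.single_le_sum
        (fun ℓ _ => (Real.rpow_pos_of_pos (hcpos i ℓ) _).le) (Finset.mem_univ j)
  · intro V hV hV1
    refine Finset.sum_le_sum fun i _ => ?_
    calc ∑ j, Ustar i j ^ α * ‖x i - μ j‖ ^ 2
        = (∑ j, c i j ^ (1/(1-α))) ^ (1-α) := by
          rw [← fuzzy_row_eq hk hα (c i) (hcpos i)]
          exact Finset.sum_congr rfl fun j _ => by rw [hU' i j]
      _ ≤ ∑ j, V i j ^ α * ‖x i - μ j‖ ^ 2 :=
          fuzzy_row_lb hα (c i) (hcpos i) (V i) (fun j => (hV i j).1) (hV1 i)
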